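/- If G is a countably compact topological group all of whose closed subgroups are separable, and H is a separable metrizable topological group, then every closed subgroup of G × H is separable. -/

import Mathlib

open Filter Topology Set TopologicalSpace

/-- A space is countably compact if every countable open cover has a finite subcover. -/
def CountablyCompact (X : Type*) [TopologicalSpace X] : Prop :=
  ∀ 𝒰 : Set (Set X), 𝒰.Countable → (∀ U ∈ 𝒰, IsOpen U) → ⋃₀ 𝒰 = Set.univ →
    ∃ ℱ ⊆ 𝒰, ℱ.Finite ∧ ⋃₀ ℱ = Set.univ

/-- In a countably compact space, every sequence has a cluster point. -/
lemma CountablyCompact.exists_mapClusterPt {X : Type*} [TopologicalSpace X]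
    (hX : CountablyCompact X) (u : ℕ → X) : ∃ x, MapClusterPt x atTop u := by
  by_contra h
  push_neg at h
  have key : ∀ x : X, ∃ n, x ∉ closure (u '' Set.Ici n) := by
    intro x
    have hx := h x
    rw [mapClusterPt_iff_frequently] at hx
    push_neg at hx
    obtain ⟨s, hs, hev⟩ := hx
    obtain ⟨N, hN⟩ := (Filter.eventually_atTop).1 hev
    refine ⟨N, fun hcl => ?_⟩
    obtain ⟨y, hy1, hy2⟩ := mem_closure_iff_nhds.1 hcl s hs
    obtain ⟨z, hz, rfl⟩ := hy2
    exact hN z hz hy1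
  set f : ℕ → Set X := fun n => (closure (u '' Set.Ici n))ᶜ with hf
  obtain ⟨ℱ, hℱsub, hℱfin, hℱcov⟩ := hX (Set.range f) (Set.countable_range f)
    (by rintro U ⟨n, rfl⟩; exact (isClosed_closure).isOpen_compl)
    (by
      ext x
      simp only [Set.mem_sUnion, Set.mem_univ, iff_true]
      obtain ⟨n, hn⟩ := key x
      exact ⟨f n, Set.mem_range_self n, hn⟩)
  have hmono : Monotone f := by
    intro a b hab
    exact compl_subset_compl.2 (closure_mono (Set.image_mono (Set.Ici_subset_Ici.2 hab)))
  choose idx hidx using fun (V : ℱ) => hℱsub V.2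
  have hbd : ∃ N, ∀ V (hV : V ∈ ℱ), V ⊆ f N := by
    haveI := hℱfin.to_subtype
    obtain ⟨N, hN⟩ := (Set.finite_range idx).bddAbove
    refine ⟨N, fun V hV => ?_⟩
    have h1 : f (idx ⟨V, hV⟩) = V := hidx ⟨V, hV⟩
    rw [← h1]
    exact hmono (hN ⟨⟨V, hV⟩, rfl⟩)
  obtain ⟨N, hN⟩ := hbd
  have : u N ∈ ⋃₀ ℱ := hℱcov ▸ Set.mem_univ _
  obtain ⟨V, hV, huV⟩ := this
  have : u N ∈ f N := hN V hV huV
  exact this (subset_closure (Set.mem_image_of_mem u (Set.mem_Ici.2 le_rfl)))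

/-- If a sequence has a cluster point in the first coordinate and converges in the second,
the pair is a cluster point of the pair sequence. -/
lemma MapClusterPt.prod_of_tendsto {X Y : Type*} [TopologicalSpace X] [TopologicalSpace Y]
    {u : ℕ → X} {v : ℕ → Y} {x : X} {y : Y}
    (hu : MapClusterPt x atTop u) (hv : Tendsto v atTop (𝓝 y)) :
    MapClusterPt (x, y) atTop (fun n => (u n, v n)) := by
  rw [mapClusterPt_iff_frequently] at hu ⊢
  intro s hs
  obtain ⟨t₁, t₂, ht₁, hxt₁, ht₂, hyt₂, hsub⟩ := mem_nhds_prod_iff'.1 hs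
  have h1 : ∃ᶠ n in atTop, u n ∈ t₁ := hu t₁ (ht₁.mem_nhds hxt₁)
  have h2 : ∀ᶠ n in atTop, v n ∈ t₂ := hv (ht₂.mem_nhds hyt₂)
  exact (h1.and_eventually h2).mono fun n ⟨ha, hb⟩ => hsub ⟨ha, hb⟩

/-- The projection `G × H → H` is a closed map when `G` is countably compact and `H` is
first countable. -/
lemma CountablyCompact.isClosedMap_snd {X Y : Type*} [TopologicalSpace X] [TopologicalSpace Y]
    [FirstCountableTopology Y] (hX : CountablyCompact X) :
    IsClosedMap (Prod.snd : X × Y → Y) := by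
  intro F hF
  rw [← closure_subset_iff_isClosed]
  intro y hy
  obtain ⟨v, hvF, hvy⟩ := mem_closure_iff_seq_limit.1 hy
  choose w hwF hw using hvF
  set u : ℕ → X := fun n => (w n).1 with hu
  have huF : ∀ n, (u n, v n) ∈ F := by
    intro n
    have : (u n, v n) = w n := by
      rw [hu]; ext <;> simp [hw n]
    rw [this]; exact hwF n
  obtain ⟨x, hx⟩ := hX.exists_mapClusterPt u
  have hcl : MapClusterPt (x, y) atTop (fun n => (u n, v n)) := hx.prod_of_tendsto hvy
  have hmem : (x, y) ∈ F := by
    have : ClusterPt (x, y) (𝓟 F) := hcl.clusterPt.mono (le_principal_iff.2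
      (Filter.mem_map.2 (Filter.Eventually.of_forall huF)))
    exact hF.closure_subset (mem_closure_iff_clusterPt.2 this)
  exact ⟨(x, y), hmem, rfl⟩

set_option maxHeartbeats 1000000 in
/-- If `G` is countably compact with all closed subgroups separable and `H` is a separable
metrizable topological group, then every closed subgroup of `G × H` is separable. -/
theorem closed_subgroups_of_product_countablyCompact_metrizable
    (G H : Type*) [Group G] [TopologicalSpace G] [IsTopologicalGroup G] [T2Space G]
    [Group H] [TopologicalSpace H] [IsTopologicalGroup H]
    [TopologicalSpace.MetrizableSpace H] [TopologicalSpace.SeparableSpace H]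
    (hGc : CountablyCompact G)
    (hG : ∀ N : Subgroup G, IsClosed (N : Set G) → TopologicalSpace.SeparableSpace N)
    (C : Subgroup (G × H)) (hC : IsClosed (C : Set (G × H))) :
    TopologicalSpace.SeparableSpace C := by
  classical
  letI : MetricSpace H := TopologicalSpace.metrizableSpaceMetric H
  haveI : SecondCountableTopology H := UniformSpace.secondCountable_of_separable H
  -- The kernel subgroup K of the projection to H
  set K : Subgroup G := C.comap (MonoidHom.inl G H) with hKdef
  have hKmem : ∀ g : G, g ∈ K ↔ ((g, 1) : G × H) ∈ C := fun g => Iff.rfl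
  have hKclosed : IsClosed (K : Set G) := by
    have heq : (K : Set G) = (fun g : G => ((g, 1) : G × H)) ⁻¹' (C : Set (G × H)) := rfl
    rw [heq]
    exact hC.preimage (continuous_id.prodMk continuous_const)
  haveI := hG K hKclosed
  obtain ⟨E₀, hE₀c, hE₀d⟩ := TopologicalSpace.exists_countable_dense K
  set E : Set G := Subtype.val '' E₀ with hEdef
  have hEc : E.Countable := hE₀c.image _
  have hEK : E ⊆ (K : Set G) := by rintro _ ⟨e, _, rfl⟩; exact e.2
  -- The image of C in H
  set P : Set H := Prod.snd '' (C : Set (G × H)) with hPdef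
  obtain ⟨D₀, hD₀c, hD₀d⟩ := TopologicalSpace.exists_countable_dense P
  -- lift each point of P to C
  have hlift0 : ∀ d : P, ∃ z : G × H, z ∈ (C : Set (G × H)) ∧ z.2 = (d : H) := by
    rintro ⟨d, z, hz, rfl⟩; exact ⟨z, hz, rfl⟩
  choose lift hliftC hlift using hlift0
  -- projection is a closed map
  have hclosedmap : IsClosedMap (Prod.snd : G × H → H) := hGc.isClosedMap_snd
  -- the candidate countable dense set
  set D : Set (G × H) :=
    Set.image2 (fun (s : G × H) (e : G) => s * (e, 1)) (lift '' D₀) E with hDdef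
  have hDc : D.Countable := (hD₀c.image _).image2 hEc _
  have hDC : D ⊆ (C : Set (G × H)) := by
    rintro _ ⟨s, ⟨d, _, rfl⟩, e, he, rfl⟩
    exact mul_mem (hliftC d) ((hKmem e).1 (hEK he))
  -- core density claim
  have hcore : ∀ x ∈ (C : Set (G × H)), ∀ U : Set (G × H), IsOpen U → x ∈ U →
      ∃ z ∈ D, z ∈ U := by
    intro x hxC U hU hxU
    set O : Set (G × H) := {z : G × H | ∃ e ∈ K, z * (e, 1) ∈ U} with hOdef
    have hOopen : IsOpen O := by
      have : O = ⋃ e ∈ (K : Set G), (fun z : G × H => z * (e, 1)) ⁻¹' U := by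
        ext z; simp [hOdef]
      rw [this]
      exact isOpen_biUnion fun e _ => hU.preimage (continuous_mul_right _)
    have hxO : x ∈ O := ⟨1, one_mem K, by rw [show ((1 : G), (1 : H)) = (1 : G × H) from rfl, mul_one]; exact hxU⟩
    -- saturation
    have hsat : ∀ z ∈ (C : Set (G × H)), z ∈ O → ∀ z' ∈ (C : Set (G × H)),
        z'.2 = z.2 → z' ∈ O := by
      intro z hzC hzO z' hz'C hsnd
      set m : G × H := z⁻¹ * z' with hmdef
      have hmC : m ∈ C := mul_mem (inv_mem hzC) hz'C
      have hm2 : m.2 = 1 := by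
        simp [hmdef, Prod.snd_mul, hsnd]
      have hmK : m.1 ∈ K := by
        rw [hKmem]
        have : ((m.1, (1 : H)) : G × H) = m := by
          ext <;> simp [hm2]
        rw [this]; exact hmC
      obtain ⟨e, heK, heU⟩ := hzO
      refine ⟨m.1⁻¹ * e, mul_mem (inv_mem hmK) heK, ?_⟩
      have hz' : z' = z * (m.1, 1) := by
        have : z * m = z' := by simp [hmdef]
        rw [← this]
        ext <;> simp [hm2]
      rw [hz']
      have : z * (m.1, (1:H)) * (m.1⁻¹ * e, 1) = z * (e, 1) := by
        rw [mul_assoc]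
        congr 1
        ext <;> simp
      rw [this]; exact heU
    -- the image of the complement is closed
    set T : Set H := Prod.snd '' ((C : Set (G × H)) \ O) with hTdef
    have hTclosed : IsClosed T := hclosedmap _ (hC.sdiff hOopen)
    have hxT : x.2 ∉ T := by
      rintro ⟨c, ⟨hcC, hcO⟩, hc2⟩
      exact hcO (hsat x hxC hxO c hcC hc2)
    -- find d ∈ D₀ close to x.2
    have hxP : x.2 ∈ P := ⟨x, hxC, rfl⟩
    obtain ⟨d, hdT, hdD₀⟩ := hD₀d.inter_open_nonempty
      (Subtype.val ⁻¹' Tᶜ) (hTclosed.isOpen_compl.preimage continuous_subtype_val)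
      ⟨⟨x.2, hxP⟩, hxT⟩
    -- the lift of d is in O
    have hsO : lift d ∈ O := by
      by_contra hno
      exact hdT ⟨lift d, ⟨hliftC d, hno⟩, hlift d⟩
    obtain ⟨e₀, he₀K, he₀U⟩ := hsO
    -- find e ∈ E close to e₀
    have hVopen : IsOpen ((fun e : G => lift d * (e, 1)) ⁻¹' U) :=
      hU.preimage (continuous_const.mul (continuous_id.prodMk continuous_const))
    obtain ⟨ε, hεV, hεE₀⟩ := hE₀d.inter_open_nonempty
      (Subtype.val ⁻¹' ((fun e : G => lift d * (e, 1)) ⁻¹' U))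
      (hVopen.preimage continuous_subtype_val) ⟨⟨e₀, he₀K⟩, he₀U⟩
    refine ⟨lift d * ((ε : G), 1), ?_, hεV⟩
    exact Set.mem_image2_of_mem (Set.mem_image_of_mem _ hdD₀) ⟨ε, hεE₀, rfl⟩
  -- conclude separability of the subtype
  refine ⟨⟨Subtype.val ⁻¹' D, hDc.preimage Subtype.val_injective, ?_⟩⟩
  rw [dense_iff_inter_open]
  intro O hO hOne
  obtain ⟨U, hU, rfl⟩ := isOpen_induced_iff.1 hO
  obtain ⟨⟨x, hxC⟩, hxU⟩ := hOne
  obtain ⟨z, hzD, hzU⟩ := hcore x hxC U hU hxU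
  exact ⟨⟨z, hDC hzD⟩, hzU, hzD⟩
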